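/- Let ε ∈ (0,1) and d ∈ ℕ. Let G be a properly edge-coloured digraph with minimum out-degree at least d such that every vertex set U of size at most d satisfies e(U,U) ≤ (ε²/4)d². Then G contains a rainbow directed path of length at least (1−ε)d. -/

import Mathlib

/-- A proper edge-colouring of a digraph: no two edges with a common start-vertex and
no two edges with a common end-vertex share a colour. -/
def ProperDiColoring {V C : Type*} (E : V → V → Prop) (c : V → V → C) : Prop :=
  (∀ u v w, E u v → E u w → c u v = c u w → v = w) ∧
  (∀ u v w, E u v → E w v → c u v = c w v → u = w)

/-- A rainbow directed path of length `ℓ`. -/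
def IsRainbowDiPath {V C : Type*} (E : V → V → Prop) (c : V → V → C) {ℓ : ℕ}
    (p : Fin (ℓ + 1) → V) : Prop :=
  Function.Injective p ∧ (∀ i : Fin ℓ, E (p i.castSucc) (p i.succ)) ∧
    Function.Injective fun i : Fin ℓ => c (p i.castSucc) (p i.succ)

/-- Let `ε ∈ (0,1)` and `d ∈ ℕ`. If `G` is a properly edge-coloured digraph with
minimum out-degree at least `d` which is `(ε²/4, d)`-locally sparse (every vertex set
`U` with `|U| ≤ d` spans at most `(ε²/4)d²` edges), then `G` has a rainbow directed
path of length at least `(1-ε)d`. -/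
lemma getElem_congr' {α : Type*} (l : List α) {a b : ℕ} (h : a = b) (ha : a < l.length) :
    l[a]'ha = l[b]'(h ▸ ha) := by subst h; rfl

lemma rainbow_of_rev {V C : Type*} (E : V → V → Prop) (c : V → V → C)
    (R : List V) (hne : R ≠ []) (hnd : R.Nodup)
    (hch : R.Chain' fun a b => E b a)
    (hcl : ((R.zip R.tail).map fun q => c q.2 q.1).Nodup) :
    ∃ p : Fin ((R.length - 1) + 1) → V, IsRainbowDiPath E c p := by
  classical
  set ℓ := R.length - 1 with hℓ
  have hlen : R.length = ℓ + 1 := by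
    have := List.length_pos_iff.mpr hne; omega
  have hidx : ∀ i : Fin (ℓ + 1), ℓ - (i : ℕ) < R.length := by
    intro i; omega
  refine ⟨fun i => R[ℓ - (i:ℕ)]'(hidx i), ?_, ?_, ?_⟩
  · intro i j hij
    have h2 : (⟨ℓ - (i:ℕ), hidx i⟩ : Fin R.length) = ⟨ℓ - (j:ℕ), hidx j⟩ :=
      (hnd.get_inj_iff).mp (by simpa using hij)
    have : ℓ - (i:ℕ) = ℓ - (j:ℕ) := by simpa [Fin.ext_iff] using h2
    have hi := i.isLt; have hj := j.isLt
    exact Fin.ext (by omega)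
  · intro i
    have hi := i.isLt
    have hch' := List.isChain_iff_getElem.mp hch (ℓ - 1 - (i:ℕ)) (by omega)
    have e1 : ℓ - 1 - (i:ℕ) + 1 = ℓ - (i:ℕ) := by omega
    have e2 : ℓ - 1 - (i:ℕ) = ℓ - ((i:ℕ) + 1) := by omega
    rw [getElem_congr' R e1, getElem_congr' R e2] at hch'
    simpa using hch'
  · intro i j hij
    simp only at hij
    set CL := ((R.zip R.tail).map fun q => c q.2 q.1) with hCL
    have hCLlen : CL.length = ℓ := by
      simp [hCL, List.length_zip, hlen]
    have hget : ∀ (k : ℕ) (hk : k < ℓ), CL[k]'(by omega) = c (R[k+1]'(by omega)) (R[k]'(by omega)) := by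
      intro k hk
      simp only [hCL, List.getElem_map, List.getElem_zip, List.getElem_tail]
    have key : ∀ k : Fin ℓ, c (R[ℓ - ((k:ℕ))]'(hidx k.castSucc)) (R[ℓ - ((k:ℕ)+1)]'(hidx k.succ))
        = CL[ℓ - 1 - (k:ℕ)]'(by have := k.isLt; omega) := by
      intro k
      have hk := k.isLt
      have e1 : ℓ - 1 - (k:ℕ) + 1 = ℓ - (k:ℕ) := by omega
      have e2 : ℓ - 1 - (k:ℕ) = ℓ - ((k:ℕ) + 1) := by omega
      rw [hget (ℓ - 1 - (k:ℕ)) (by omega), getElem_congr' R e1, getElem_congr' R e2]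
    have hij' : CL[ℓ - 1 - (i:ℕ)]'(by have := i.isLt; omega) = CL[ℓ - 1 - (j:ℕ)]'(by have := j.isLt; omega) := by
      rw [← key i, ← key j]
      simpa using hij
    have h2 : (⟨ℓ - 1 - (i:ℕ), by have := i.isLt; omega⟩ : Fin CL.length) = ⟨ℓ - 1 - (j:ℕ), by have := j.isLt; omega⟩ :=
      (hcl.get_inj_iff).mp (by simpa using hij')
    have : ℓ - 1 - (i:ℕ) = ℓ - 1 - (j:ℕ) := by simpa [Fin.ext_iff] using h2
    have hi := i.isLt; have hj := j.isLt
    exact Fin.ext (by omega)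

theorem stmt5 {V C : Type*} [Fintype V] [Nonempty V]
    (ε : ℝ) (hε0 : 0 < ε) (hε1 : ε < 1) (d : ℕ)
    (E : V → V → Prop) (c : V → V → C)
    (hloopless : ∀ v, ¬ E v v) (hproper : ProperDiColoring E c)
    (hdeg : ∀ v, d ≤ {w | E v w}.ncard)
    (hsparse : ∀ U : Finset V, U.card ≤ d →
      ({q : V × V | q.1 ∈ U ∧ q.2 ∈ U ∧ E q.1 q.2}.ncard : ℝ) ≤ ε ^ 2 / 4 * d ^ 2) :
    ∃ (ℓ : ℕ) (p : Fin (ℓ + 1) → V), IsRainbowDiPath E c p ∧ (1 - ε) * d ≤ (ℓ : ℝ) := by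
  classical
  obtain ⟨v₀⟩ := ‹Nonempty V›
  rcases Nat.eq_zero_or_pos d with hd0 | hd1
  · refine ⟨0, fun _ => v₀, ⟨fun a b _ => Fin.ext (by omega),
      fun i => i.elim0, fun i => i.elim0⟩, ?_⟩
    rw [hd0]; norm_num
  -- setup
  set m : ℕ := ⌈(1 - ε) * d⌉₊ with hm
  have hdR : (0:ℝ) < (d:ℕ) := by exact_mod_cast hd1
  have hd0R : (0:ℝ) < (1 - ε) * d := by nlinarith
  have hm1 : 1 ≤ m := Nat.ceil_pos.mpr hd0R
  have hmd : m ≤ d := by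
    rw [hm]; exact Nat.ceil_le.mpr (by nlinarith)
  set s : ℕ := d + 1 - m with hs
  have hs0 : 0 < s := by omega
  have hsd : s ≤ d := by omega
  have hscast : (s:ℝ) = (d:ℝ) + 1 - (m:ℝ) := by
    rw [hs]; push_cast [Nat.cast_sub (by omega : m ≤ d + 1)]; ring
  have hεs : ε * d < (s:ℝ) := by
    have hceil : (m:ℝ) < (1 - ε) * d + 1 := Nat.ceil_lt_add_one (le_of_lt hd0R)
    rw [hscast]; nlinarith
  have hεd0 : (0:ℝ) ≤ ε * d := by positivity
  -- degrees as finsets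
  have hdegF : ∀ v, d ≤ (Finset.univ.filter fun w => E v w).card := by
    intro v
    have h1 : {w | E v w} = ↑(Finset.univ.filter fun w => E v w) := by
      ext w; simp
    have := hdeg v
    rwa [h1, Set.ncard_coe_finset] at this
  have hVd : d < Fintype.card V := by
    have h1 : (Finset.univ.filter fun w => E v₀ w) ⊆ Finset.univ.erase v₀ := by
      intro w hw
      simp only [Finset.mem_filter] at hw
      refine Finset.mem_erase.mpr ⟨?_, Finset.mem_univ _⟩
      rintro rfl
      exact hloopless _ hw.2
    have h2 := Finset.card_le_card h1
    rw [Finset.card_erase_of_mem (Finset.mem_univ _)] at h2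
    have h3 := hdegF v₀
    have h4 : 0 < Fintype.card V := Fintype.card_pos
    simp only [Finset.card_univ] at h2
    omega
  have hks : ∀ k : ℕ, ((k * s : ℕ) : ℝ) ≤ ε ^ 2 / 4 * d ^ 2 → k < s := by
    intro k hk
    have h1 : ((k:ℝ)) * s ≤ ε ^ 2 / 4 * d ^ 2 := by push_cast at hk; linarith [hk]
    have h2 : ε ^ 2 / 4 * d ^ 2 < (s:ℝ) * s := by nlinarith
    have h3 : ((k:ℝ)) * s < (s:ℝ) * s := lt_of_le_of_lt h1 h2
    have hs0R : (0:ℝ) < s := by exact_mod_cast hs0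
    have : (k:ℝ) < (s:ℝ) := lt_of_mul_lt_mul_right h3 (le_of_lt hs0R)
    exact_mod_cast this
  -- main induction
  have main : ∀ n : ℕ, ∀ (R : List V) (B : Finset V),
      R ≠ [] → R.Nodup → R.Chain' (fun a b => E b a) →
      ((R.zip R.tail).map fun q => c q.2 q.1).Nodup →
      (∀ b ∈ B, b ∉ R) →
      (∀ b ∈ B, s ≤ ((R.toFinset ∪ B).filter fun w => E b w).card) →
      ((B.card * s : ℕ) : ℝ) ≤ ε ^ 2 / 4 * d ^ 2 →
      2 * (Fintype.card V - (R.toFinset ∪ B).card) + (s - B.card) = n →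
      ∃ (ℓ : ℕ) (p : Fin (ℓ + 1) → V), IsRainbowDiPath E c p ∧ (1 - ε) * d ≤ (ℓ : ℝ) := by
    intro n
    induction n using Nat.strong_induction_on with
    | _ n ih =>
    intro R B h1 h2 h3 h4 h5 h6 h7 hμ
    by_cases hsucc : m + 1 ≤ R.length
    · -- success
      obtain ⟨p, hp⟩ := rainbow_of_rev E c R h1 h2 h3 h4
      refine ⟨R.length - 1, p, hp, ?_⟩
      have hm' : (m:ℝ) ≤ ((R.length - 1 : ℕ) : ℝ) := by
        exact_mod_cast (by omega : m ≤ R.length - 1)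
      exact le_trans (Nat.le_ceil _) hm'
    push_neg at hsucc
    have hRlen : R.length ≤ m := by omega
    obtain ⟨v, t, rfl⟩ := List.exists_cons_of_ne_nil h1
    simp only [List.tail_cons] at h4
    set T : Finset V := ((v :: t).toFinset ∪ B) with hT
    have hvT : v ∈ T := by simp [hT]
    have hBsubT : ∀ b ∈ B, b ∈ T := fun b hb => by simp [hT, hb]
    have hvB : v ∉ B := fun hvB => (h5 v hvB) List.mem_cons_self
    have hTcardle : T.card ≤ Fintype.card V := Finset.card_le_univ T
    have hBs : B.card < s := hks B.card h7
    have hTcard : T.card ≤ d := by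
      have hdisj : Disjoint (v :: t).toFinset B := by
        rw [Finset.disjoint_left]
        intro a ha hb
        exact h5 a hb (by simpa using ha)
      have hcu := Finset.card_union_of_disjoint hdisj
      have hndc : (v :: t).toFinset.card = (v :: t).length := List.toFinset_card_of_nodup h2
      rw [hT, hcu, hndc]
      simp only [List.length_cons] at *
      omega
    set CL : List C := (((v :: t).zip t).map fun q => c q.2 q.1) with hCL
    by_cases hext : ∃ w, E v w ∧ w ∉ T ∧ c v w ∉ CL
    · -- extend
      obtain ⟨w, hEvw, hwT, hwc⟩ := hext
      have hwR : w ∉ v :: t := fun h =>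
        hwT (Finset.mem_union_left _ (List.mem_toFinset.mpr h))
      have hT' : ((w :: v :: t).toFinset ∪ B) = insert w T := by
        ext a; simp [hT]; try tauto
      have hT'card : ((w :: v :: t).toFinset ∪ B).card = T.card + 1 := by
        rw [hT', Finset.card_insert_of_notMem hwT]
      have hTlt : T.card + 1 ≤ Fintype.card V := by
        rw [← hT'card]; exact Finset.card_le_univ _
      refine ih (2 * (Fintype.card V - ((w :: v :: t).toFinset ∪ B).card) + (s - B.card))
        ?_ (w :: v :: t) B (by simp) ?_ ?_ ?_ ?_ ?_ h7 rfl
      · rw [hT'card]; omega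
      · exact List.nodup_cons.mpr ⟨hwR, h2⟩
      · exact List.isChain_cons_cons.mpr ⟨hEvw, h3⟩
      · simp only [List.tail_cons, List.zip_cons_cons, List.map_cons, List.nodup_cons]
        exact ⟨hwc, h4⟩
      · intro b hb
        have hbT := hBsubT b hb
        have hb5 := h5 b hb
        simp only [List.mem_cons, not_or] at hb5 ⊢
        exact ⟨fun h => hwT (h ▸ hbT), hb5⟩
      · intro b hb
        rw [hT']
        refine le_trans (h6 b hb) (Finset.card_le_card ?_)
        exact Finset.filter_subset_filter _ (Finset.subset_insert _ _)
    · -- stuck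
      push_neg at hext
      have hNT : s ≤ (T.filter fun w => E v w).card := by
        set N : Finset V := (Finset.univ.filter fun w => E v w) with hN
        set Bad : Finset V := (N.filter fun w => c v w ∈ CL) with hBad
        have hBadcard : Bad.card ≤ t.length := by
          have hinj : Bad.card ≤ CL.toFinset.card := by
            refine Finset.card_le_card_of_injOn (fun w => c v w) ?_ ?_
            · intro a ha
              simp only [hBad, Finset.mem_coe, Finset.mem_filter] at ha
              exact List.mem_toFinset.mpr ha.2
            · intro a ha b hb hab
              simp only [hBad, hN, Finset.coe_filter, Set.mem_setOf_eq, Finset.mem_filter,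
                Finset.mem_univ, true_and] at ha hb
              exact hproper.1 v a b ha.1 hb.1 hab
          have hCLlen : CL.length = t.length := by
            simp [hCL, List.length_zip]
          exact le_trans hinj (le_trans CL.toFinset_card_le (le_of_eq hCLlen))
        have hsub : N ⊆ Bad ∪ (T.filter fun w => E v w) := by
          intro w hw
          have hEvw : E v w := by
            rw [hN] at hw; simpa using hw
          by_cases hc : c v w ∈ CL
          · exact Finset.mem_union_left _ (by simp [hBad, hN, hEvw, hc])
          · by_cases hwT : w ∈ T
            · exact Finset.mem_union_right _ (by simp [hEvw, hwT])
            · exact absurd hc (by simpa using hext w hEvw hwT)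
        have hd' : d ≤ N.card := by rw [hN]; exact hdegF v
        have hcard := Finset.card_le_card hsub
        have hUn := Finset.card_union_le Bad (T.filter fun w => E v w)
        have htm : t.length + 1 ≤ m := by simpa using hRlen
        omega
      -- sparsity: bound on bans
      have h7' : (((B.card + 1) * s : ℕ) : ℝ) ≤ ε ^ 2 / 4 * d ^ 2 := by
        set B' : Finset V := insert v B with hB'
        have hB'card : B'.card = B.card + 1 := Finset.card_insert_of_notMem hvB
        set SF : Finset (V × V) := ((T ×ˢ T).filter fun q => E q.1 q.2) with hSF
        have hset : {q : V × V | q.1 ∈ T ∧ q.2 ∈ T ∧ E q.1 q.2} = ↑SF := by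
          ext q; simp [hSF, Finset.mem_product, and_assoc]
        have hsp := hsparse T hTcard
        rw [hset, Set.ncard_coe_finset] at hsp
        have hdisj : ∀ x ∈ B', ∀ y ∈ B', x ≠ y →
            Disjoint ((T.filter fun w => E x w).image fun w => (x, w))
              ((T.filter fun w => E y w).image fun w => (y, w)) := by
          intro x _ y _ hxy
          rw [Finset.disjoint_left]
          rintro q hqx hqy
          obtain ⟨a, _, rfl⟩ := Finset.mem_image.mp hqx
          obtain ⟨b, _, hq⟩ := Finset.mem_image.mp hqy
          exact hxy (congrArg Prod.fst hq).symm
        have hUsub : (B'.biUnion fun b => (T.filter fun w => E b w).image fun w => (b, w)) ⊆ SF := by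
          intro q hq
          obtain ⟨b, hb, hq2⟩ := Finset.mem_biUnion.mp hq
          obtain ⟨a, ha, rfl⟩ := Finset.mem_image.mp hq2
          simp only [Finset.mem_filter] at ha
          have hbT : b ∈ T := by
            rcases Finset.mem_insert.mp hb with rfl | hb'
            · exact hvT
            · exact hBsubT b hb'
          simp only [hSF, Finset.mem_filter, Finset.mem_product]
          exact ⟨⟨hbT, ha.1⟩, ha.2⟩
        have hcardsum : ∀ b : V, ((T.filter fun w => E b w).image fun w => (b, w)).card
            = (T.filter fun w => E b w).card := by
          intro b
          refine Finset.card_image_of_injective _ ?_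
          intro x y hxy
          simpa using congrArg Prod.snd hxy
        have hsum : B'.card * s ≤ SF.card := by
          have h1 : B'.card • s ≤ ∑ b ∈ B', (T.filter fun w => E b w).card := by
            refine Finset.card_nsmul_le_sum _ _ _ ?_
            intro b hb
            rcases Finset.mem_insert.mp hb with rfl | hb'
            · exact hNT
            · exact h6 b hb'
          have h0 : B'.card • s = B'.card * s := by simp
          have h2 : ∑ b ∈ B', (T.filter fun w => E b w).card
              = (B'.biUnion fun b => (T.filter fun w => E b w).image fun w => (b, w)).card := by
            rw [Finset.card_biUnion hdisj]
            exact Finset.sum_congr rfl fun b _ => (hcardsum b).symm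
          have h3 := Finset.card_le_card hUsub
          omega
        calc (((B.card + 1) * s : ℕ) : ℝ) = ((B'.card * s : ℕ) : ℝ) := by rw [hB'card]
          _ ≤ (SF.card : ℝ) := by exact_mod_cast hsum
          _ ≤ _ := hsp
      have hB1s : B.card + 1 < s := hks _ h7'
      -- ban
      cases t with
      | cons v' t' =>
        have hT'eq : ((v' :: t').toFinset ∪ insert v B) = T := by
          ext a; simp [hT]; try tauto
        have h4c : (c v' v :: ((v' :: t').zip t').map fun q => c q.2 q.1).Nodup := by
          rw [hCL] at h4
          simpa [List.zip_cons_cons] using h4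
        refine ih (2 * (Fintype.card V - ((v' :: t').toFinset ∪ insert v B).card)
            + (s - (insert v B).card)) ?_ (v' :: t') (insert v B) (by simp)
            ((List.nodup_cons.mp h2).2) (List.isChain_cons_cons.mp h3).2 ?_ ?_ ?_ ?_ rfl
        · rw [hT'eq, Finset.card_insert_of_notMem hvB]
          omega
        · simp only [List.tail_cons]
          exact (List.nodup_cons.mp h4c).2
        · intro b hb
          rcases Finset.mem_insert.mp hb with rfl | hb'
          · exact (List.nodup_cons.mp h2).1
          · intro hmem
            exact h5 b hb' (List.mem_cons_of_mem _ hmem)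
        · intro b hb
          rw [hT'eq]
          rcases Finset.mem_insert.mp hb with rfl | hb'
          · exact hNT
          · exact h6 b hb'
        · rw [Finset.card_insert_of_notMem hvB]; exact h7'
      | nil =>
        have hTeq : T = insert v B := by
          ext a; simp [hT]
        obtain ⟨u, hu⟩ : ∃ u, u ∉ insert v B := by
          by_contra h
          push_neg at h
          have hsub : (Finset.univ : Finset V) ⊆ insert v B := fun a _ => h a
          have hc1 := Finset.card_le_card hsub
          rw [Finset.card_univ, Finset.card_insert_of_notMem hvB] at hc1
          omega
        have huT : u ∉ T := by rw [hTeq]; exact hu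
        have hT''eq : (([u] : List V).toFinset ∪ insert v B) = insert u T := by
          rw [hTeq]; ext a; simp; tauto
        have hT''card : (([u] : List V).toFinset ∪ insert v B).card = T.card + 1 := by
          rw [hT''eq, Finset.card_insert_of_notMem huT]
        have hTlt : T.card + 1 ≤ Fintype.card V := by
          rw [← hT''card]; exact Finset.card_le_univ _
        refine ih (2 * (Fintype.card V - (([u] : List V).toFinset ∪ insert v B).card)
            + (s - (insert v B).card)) ?_ [u] (insert v B) (by simp) (by simp)
            (List.isChain_singleton _) (by simp) ?_ ?_ ?_ rfl
        · rw [hT''card, Finset.card_insert_of_notMem hvB]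
          omega
        · intro b hb
          simp only [List.mem_singleton]
          rintro rfl
          exact hu hb
        · intro b hb
          rw [hT''eq]
          have hsubT : T ⊆ insert u T := Finset.subset_insert _ _
          rcases Finset.mem_insert.mp hb with rfl | hb'
          · exact le_trans hNT (Finset.card_le_card (Finset.filter_subset_filter _ hsubT))
          · exact le_trans (h6 b hb') (Finset.card_le_card (Finset.filter_subset_filter _ hsubT))
        · rw [Finset.card_insert_of_notMem hvB]; exact h7'
  -- kick off
  refine main (2 * (Fintype.card V - (([v₀] : List V).toFinset ∪ ∅).card) + (s - (∅ : Finset V).card))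
    [v₀] ∅ (by simp) (by simp) (List.isChain_singleton _) (by simp) (by simp) (by simp) ?_ rfl
  simp only [Finset.card_empty, Nat.zero_mul, Nat.cast_zero]
  positivity
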